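/- For the polynomial von Mangoldt function Λ (with Λ(P^m) = deg P for monic irreducible P and positive integer m, zero otherwise on monic polynomials), the logarithmic derivative of the zeta function Z(T) = 1/(1-qT) satisfies T · d/dT log Z(T) = Σ_{n≥1} (Σ_{f ∈ M_n} Λ(f)) T^n; equivalently Σ_{f ∈ M_n} Λ(f) = q^n for every n ≥ 1 (the prime polynomial theorem identity). -/

import Mathlib

open Polynomial

theorem prime_polynomial_theorem_identity {Fq : Type*} [Field Fq] [Fintype Fq]
    (Λ : Polynomial Fq → ℤ)
    (h1 : ∀ (P : Polynomial Fq) (k : ℕ), P.Monic → Irreducible P → 1 ≤ k →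
      Λ (P ^ k) = P.natDegree)
    (h2 : ∀ f : Polynomial Fq, f.Monic →
      (¬ ∃ (P : Polynomial Fq) (k : ℕ), P.Monic ∧ Irreducible P ∧ 1 ≤ k ∧ f = P ^ k) →
      Λ f = 0)
    (n : ℕ) (hn : 1 ≤ n) :
    ∑ᶠ f : {f : Polynomial Fq // f.Monic ∧ f.natDegree = n}, Λ f.1
      = (Fintype.card Fq : ℤ) ^ n := by
  classical
  set q := Fintype.card Fq with hq_def
  have hq1 : 1 < q := Fintype.one_lt_card
  have hqn1 : 1 < q ^ n := Nat.one_lt_pow (by omega) hq1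
  obtain ⟨p, hchar⟩ := CharP.exists Fq
  obtain ⟨m, hp, hqm⟩ := FiniteField.card Fq p
  haveI : Fact p.Prime := ⟨hp⟩
  rw [← hq_def] at hqm
  set g : Polynomial Fq := X ^ q ^ n - X with hg_def
  have hg_ne : g ≠ 0 := FiniteField.X_pow_card_sub_X_ne_zero Fq hqn1
  have hg_deg : g.natDegree = q ^ n := FiniteField.X_pow_card_sub_X_natDegree_eq Fq hqn1
  have hg_sep : g.Separable := galois_poly_separable p (q ^ n) (by
    rw [hqm]; exact dvd_pow (dvd_pow_self p m.pos.ne') (by omega))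
  -- the splitting field
  set L := g.SplittingField with hL_def
  haveI : Finite L := Module.finite_of_finite Fq
  haveI : Fintype L := Fintype.ofFinite L
  haveI : CharP L p := charP_of_injective_algebraMap' (A := L) Fq p
  -- every element of L satisfies x ^ q ^ n = x
  have hpow : ∀ x : L, x ^ q ^ n = x := by
    have hqnp : q ^ n = p ^ ((m : ℕ) * n) := by rw [hqm, ← pow_mul]
    let S : Subalgebra Fq L :=
      { carrier := {x : L | x ^ q ^ n = x}
        mul_mem' := fun {a b} ha hb => by
          simp only [Set.mem_setOf_eq] at *
          rw [mul_pow, ha, hb]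
        one_mem' := by simp
        add_mem' := fun {a b} ha hb => by
          simp only [Set.mem_setOf_eq] at *
          rw [hqnp, add_pow_char_pow, ← hqnp, ha, hb]
        zero_mem' := by
          simp only [Set.mem_setOf_eq]
          exact zero_pow (by positivity)
        algebraMap_mem' := fun a => by
          simp only [Set.mem_setOf_eq]
          rw [← map_pow, FiniteField.pow_card_pow] }
    intro x
    have hx : x ∈ Algebra.adjoin Fq (g.rootSet L) := by
      rw [Polynomial.SplittingField.adjoin_rootSet]; trivial
    have hle : Algebra.adjoin Fq (g.rootSet L) ≤ S := by
      apply Algebra.adjoin_le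
      intro y hy
      rw [Polynomial.mem_rootSet_of_ne hg_ne] at hy
      have : y ^ q ^ n - y = 0 := by simpa [hg_def, sub_eq_zero] using hy
      simpa [S, sub_eq_zero] using this
    exact hle hx
  -- cardinality of L
  have hrootSet : g.rootSet L = Set.univ := by
    rw [Set.eq_univ_iff_forall]
    intro x
    rw [Polynomial.mem_rootSet_of_ne hg_ne]
    simp [hg_def, hpow x, sub_eq_zero]
  have hcardL : Fintype.card L = q ^ n := by
    have key : Fintype.card (g.rootSet L) = g.natDegree :=
      Polynomial.card_rootSet_eq_natDegree hg_sep (Polynomial.SplittingField.splits g)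
    calc Fintype.card L = Fintype.card (Set.univ : Set L) :=
          (Fintype.card_congr (Equiv.Set.univ L)).symm
      _ = Fintype.card (g.rootSet L) := Fintype.card_congr (Equiv.setCongr hrootSet.symm)
      _ = q ^ n := by rw [key, hg_deg]
  -- finrank
  have hrank : Module.finrank Fq L = n := by
    have h' := Module.card_fintype (Module.finBasis Fq L)
    rw [Fintype.card_fin, ← hq_def] at h'
    exact Nat.pow_right_injective hq1 (h'.symm.trans hcardL)
  -- the image of minpoly
  set D : Finset (Polynomial Fq) := Finset.image (fun x : L => minpoly Fq x) Finset.univ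
    with hD_def
  have hD_mem : ∀ P ∈ D, P.Monic ∧ Irreducible P ∧ P.natDegree ∣ n := by
    intro P hP
    rw [hD_def, Finset.mem_image] at hP
    obtain ⟨x, -, rfl⟩ := hP
    have hint : IsIntegral Fq x := IsIntegral.of_finite Fq x
    exact ⟨minpoly.monic hint, minpoly.irreducible hint, hrank ▸ minpoly.degree_dvd hint⟩
  -- every monic irreducible of degree dividing n is in D
  have hD_mem' : ∀ P : Polynomial Fq, P.Monic → Irreducible P → P.natDegree ∣ n → P ∈ D := by
    intro P hmo hirr hdvd
    haveI := Fact.mk hirr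
    set d := P.natDegree with hd_def
    have hd1 : 1 ≤ d := hirr.natDegree_pos
    -- P divides X ^ q ^ d - X
    have hPdvd : P ∣ (X ^ q ^ d - X : Polynomial Fq) := by
      haveI := (AdjoinRoot.powerBasis hirr.ne_zero).finite
      haveI : Finite (AdjoinRoot P) := Module.finite_of_finite Fq
      haveI : Fintype (AdjoinRoot P) := Fintype.ofFinite _
      have hcard : Fintype.card (AdjoinRoot P) = q ^ d := by
        have h1' := Module.card_fintype (Module.finBasis Fq (AdjoinRoot P))
        rwa [Fintype.card_fin, (AdjoinRoot.powerBasis hirr.ne_zero).finrank,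
          AdjoinRoot.powerBasis_dim, ← hq_def, ← hd_def] at h1'
      have hroot : (AdjoinRoot.root P) ^ q ^ d = AdjoinRoot.root P := by
        rw [← hcard]; exact FiniteField.pow_card _
      have : minpoly Fq (AdjoinRoot.root P) ∣ (X ^ q ^ d - X : Polynomial Fq) := by
        apply minpoly.dvd
        simp [hroot, sub_eq_zero]
      rwa [AdjoinRoot.minpoly_root hirr.ne_zero, hmo.leadingCoeff, inv_one, map_one,
        mul_one] at this
    -- X ^ q ^ d - X divides g
    have hdvd2 : (X ^ q ^ d - X : Polynomial Fq) ∣ g := by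
      obtain ⟨c, hc⟩ := hdvd
      have hqd1 : 1 ≤ q ^ d := Nat.one_le_pow _ _ (by omega)
      have hqn1' : 1 ≤ q ^ n := Nat.one_le_pow _ _ (by omega)
      have h1 : (X ^ (q ^ d - 1) - 1 : Polynomial Fq) ∣ X ^ (q ^ n - 1) - 1 := by
        have hnat : q ^ d - 1 ∣ q ^ n - 1 := by
          have := Nat.sub_dvd_pow_sub_pow (q ^ d) 1 c
          rwa [one_pow, ← pow_mul, ← hc] at this
        obtain ⟨e, he⟩ := hnat
        have := sub_dvd_pow_sub_pow (X ^ (q ^ d - 1) : Polynomial Fq) 1 e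
        rwa [one_pow, ← pow_mul, ← he] at this
      have hfac : ∀ N : ℕ, 1 ≤ N → (X ^ N - X : Polynomial Fq) = X * (X ^ (N - 1) - 1) := by
        intro N hN
        have hN' : N - 1 + 1 = N := by omega
        rw [mul_sub, mul_one, ← pow_succ', hN']
      rw [hg_def, hfac _ hqn1', hfac _ hqd1]
      exact mul_dvd_mul_left _ h1
    -- P has a root in L
    have hPsplits : Splits (P.map (algebraMap Fq L)) :=
      (Polynomial.SplittingField.splits g).of_dvd (Polynomial.map_ne_zero hg_ne)
        (Polynomial.map_dvd _ (hPdvd.trans hdvd2))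
    obtain ⟨x, hx⟩ := hPsplits.exists_eval_eq_zero
      (by rw [degree_map]; exact Polynomial.degree_ne_of_natDegree_ne hirr.natDegree_pos.ne')
    have hxmin : minpoly Fq x = P :=
      (minpoly.eq_of_irreducible_of_monic hirr (by rwa [eval_map, ← aeval_def] at hx) hmo).symm
    rw [hD_def, Finset.mem_image]
    exact ⟨x, Finset.mem_univ x, hxmin⟩
  -- counting: q ^ n = sum of degrees over D
  have hcount : (q : ℤ) ^ n = ∑ P ∈ D, (P.natDegree : ℤ) := by
    have := Finset.card_eq_sum_card_image (fun x : L => minpoly Fq x) Finset.univ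
    rw [Finset.card_univ, hcardL] at this
    have hfib : ∀ P ∈ D, (Finset.univ.filter fun x : L => minpoly Fq x = P).card
        = P.natDegree := by
      intro P hP
      obtain ⟨hmo, hirr, -⟩ := hD_mem P hP
      obtain ⟨x₀, -, hx₀⟩ := Finset.mem_image.mp (hD_def ▸ hP)
      have hsep : P.Separable := PerfectField.separable_of_irreducible hirr
      have hsplits : Splits (P.map (algebraMap Fq L)) := by
        rw [← hx₀]; exact Normal.splits inferInstance x₀
      have hcardroot : Fintype.card (P.rootSet L) = P.natDegree :=
        Polynomial.card_rootSet_eq_natDegree hsep hsplits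
      rw [← hcardroot, ← Set.toFinset_card]
      congr 1
      ext x
      simp only [Finset.mem_filter, Finset.mem_univ, true_and, Set.mem_toFinset,
        Polynomial.mem_rootSet_of_ne hirr.ne_zero]
      constructor
      · rintro rfl; exact minpoly.aeval Fq x
      · intro hx
        exact (minpoly.eq_of_irreducible_of_monic hirr hx hmo).symm
    rw [Finset.sum_congr rfl hfib] at this
    exact_mod_cast this
  -- finiteness of the index type
  haveI : Finite {f : Polynomial Fq // f.Monic ∧ f.natDegree = n} := by
    apply Finite.of_injective (fun f : {f : Polynomial Fq // f.Monic ∧ f.natDegree = n} =>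
      (fun i : Fin (n + 1) => f.1.coeff i))
    intro a b h
    apply Subtype.ext
    ext i
    by_cases hi : i ≤ n
    · exact congrFun h ⟨i, by omega⟩
    · rw [Polynomial.coeff_eq_zero_of_natDegree_lt (by rw [a.2.2]; omega),
        Polynomial.coeff_eq_zero_of_natDegree_lt (by rw [b.2.2]; omega)]
  haveI : Fintype {f : Polynomial Fq // f.Monic ∧ f.natDegree = n} := Fintype.ofFinite _
  rw [finsum_eq_sum_of_fintype]
  -- rewrite the sum as a sum over a Finset of polynomials
  set M : Finset (Polynomial Fq) :=
    Finset.image Subtype.val (Finset.univ : Finset {f : Polynomial Fq // f.Monic ∧ f.natDegree = n})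
    with hM_def
  have hM_mem : ∀ f : Polynomial Fq, f ∈ M ↔ f.Monic ∧ f.natDegree = n := by
    intro f
    simp only [hM_def, Finset.mem_image, Finset.mem_univ, true_and]
    constructor
    · rintro ⟨⟨f', hf'⟩, -, rfl⟩; exact hf'
    · intro hf; exact ⟨⟨f, hf⟩, rfl⟩
  have hsum1 : (∑ f : {f : Polynomial Fq // f.Monic ∧ f.natDegree = n}, Λ f.1)
      = ∑ f ∈ M, Λ f := by
    rw [hM_def, Finset.sum_image (by intro a _ b _ h; exact Subtype.ext h)]
  rw [hsum1]
  -- restrict to prime powers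
  set T : Finset (Polynomial Fq) := M.filter
    (fun f => ∃ (P : Polynomial Fq) (k : ℕ), P.Monic ∧ Irreducible P ∧ 1 ≤ k ∧ f = P ^ k)
    with hT_def
  have hsum2 : ∑ f ∈ M, Λ f = ∑ f ∈ T, Λ f := by
    rw [hT_def, Finset.sum_filter_of_ne]
    intro f hf hΛ
    by_contra hne
    exact hΛ (h2 f ((hM_mem f).mp hf).1 hne)
  rw [hsum2, hcount]
  -- bijection between D and T
  refine (Finset.sum_bij (fun (P : Polynomial Fq) (_ : P ∈ D) => P ^ (n / P.natDegree))
    ?_ ?_ ?_ ?_).symm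
  · -- maps into T
    intro P hP
    show P ^ (n / P.natDegree) ∈ T
    obtain ⟨hmo, hirr, hdvd⟩ := hD_mem P hP
    have hd1 : 1 ≤ P.natDegree := hirr.natDegree_pos
    have hk1 : 1 ≤ n / P.natDegree := Nat.one_le_div_iff (by omega) |>.mpr
      (Nat.le_of_dvd (by omega) hdvd)
    rw [hT_def, Finset.mem_filter, hM_mem]
    refine ⟨⟨hmo.pow _, ?_⟩, P, n / P.natDegree, hmo, hirr, hk1, rfl⟩
    rw [Polynomial.natDegree_pow]
    exact Nat.div_mul_cancel hdvd
  · -- injective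
    intro P hP Q hQ h
    replace h : P ^ (n / P.natDegree) = Q ^ (n / Q.natDegree) := h
    obtain ⟨hmoP, hirrP, hdvdP⟩ := hD_mem P hP
    obtain ⟨hmoQ, hirrQ, hdvdQ⟩ := hD_mem Q hQ
    have hk1 : 1 ≤ n / P.natDegree := Nat.one_le_div_iff (by have := hirrP.natDegree_pos; omega)
      |>.mpr (Nat.le_of_dvd (by omega) hdvdP)
    have hk1' : 1 ≤ n / Q.natDegree := Nat.one_le_div_iff (by have := hirrQ.natDegree_pos; omega)
      |>.mpr (Nat.le_of_dvd (by omega) hdvdQ)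
    have hPdvd : P ∣ Q ^ (n / Q.natDegree) := by
      rw [← h]; exact dvd_pow_self P (by omega)
    have hprime : Prime P := hirrP.prime
    have : P ∣ Q := hprime.dvd_of_dvd_pow hPdvd
    have hassoc : Associated P Q := hirrP.associated_of_dvd hirrQ this
    exact Polynomial.eq_of_monic_of_associated hmoP hmoQ hassoc
  · -- surjective
    intro f hf
    rw [hT_def, Finset.mem_filter, hM_mem] at hf
    obtain ⟨⟨hmo, hdeg⟩, P, k, hmoP, hirrP, hk1, rfl⟩ := hf
    have hd1 : 1 ≤ P.natDegree := hirrP.natDegree_pos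
    have hdegkd : k * P.natDegree = n := by rw [← hdeg, Polynomial.natDegree_pow]
    have hdvd : P.natDegree ∣ n := ⟨k, by rw [← hdegkd, mul_comm]⟩
    refine ⟨P, hD_mem' P hmoP hirrP hdvd, ?_⟩
    show P ^ (n / P.natDegree) = P ^ k
    congr 1
    rw [← hdegkd, Nat.mul_div_cancel _ (by omega)]
  · -- values agree
    intro P hP
    obtain ⟨hmo, hirr, hdvd⟩ := hD_mem P hP
    have hd1 : 1 ≤ P.natDegree := hirr.natDegree_pos
    have hk1 : 1 ≤ n / P.natDegree := Nat.one_le_div_iff (by omega) |>.mpr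
      (Nat.le_of_dvd (by omega) hdvd)
    show (P.natDegree : ℤ) = Λ (P ^ (n / P.natDegree))
    exact (h1 P (n / P.natDegree) hmo hirr hk1).symm
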